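/- For any λ ∈ K^{d+1}, the K-linear map φ̄^λ : D̄_E ⊗ D̄_V → D̄_E ⊗ D̄_V defined on basis vectors by: φ̄^λ(a ⊗ b) = φ^λ(a ⊗ b) for a, b ∈ ℕ^{d+1}, φ̄^λ(a ⊗ ★) = 0 for a ∈ ℕ^{d+1}, φ̄^λ(Ξ ⊗ b) = Ξ ⊗ b for b ∈ ℕ^{d+1}, and φ̄^λ(Ξ ⊗ ★) = 0, is tree-compatible (with edge space D̄_E and vertex space D̄_V). -/

import Mathlib

open TensorProduct

/-- The endomorphism `φ₁₃ = (τ ⊗ id) ∘ (id ⊗ φ) ∘ (τ ⊗ id)` of `D_E ⊗ D_E ⊗ D_V`,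
where `τ` is the flip of the first two factors. -/
noncomputable def phi13 (K : Type*) [CommSemiring K] (E V : Type*)
    [AddCommMonoid E] [Module K E] [AddCommMonoid V] [Module K V]
    (φ : TensorProduct K E V →ₗ[K] TensorProduct K E V) :
    TensorProduct K E (TensorProduct K E V) →ₗ[K] TensorProduct K E (TensorProduct K E V) :=
  (TensorProduct.leftComm K E E V).toLinearMap ∘ₗ LinearMap.lTensor E φ ∘ₗ
    (TensorProduct.leftComm K E E V).toLinearMap

/-- `φ` is tree-compatible if `φ₁₃ ∘ φ₂₃ = φ₂₃ ∘ φ₁₃`, where `φ₂₃ = id ⊗ φ`. -/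
noncomputable def TreeCompatible (K : Type*) [CommSemiring K] (E V : Type*)
    [AddCommMonoid E] [Module K E] [AddCommMonoid V] [Module K V]
    (φ : TensorProduct K E V →ₗ[K] TensorProduct K E V) : Prop :=
  phi13 K E V φ ∘ₗ LinearMap.lTensor E φ = LinearMap.lTensor E φ ∘ₗ phi13 K E V φ

lemma choose_swap {n l m : ℕ} (h : l + m ≤ n) :
    n.choose l * (n - l).choose m = n.choose m * (n - m).choose l := by
  have h1 := Nat.choose_mul (n := n) (Nat.le_add_right l m)
  have h2 := Nat.choose_mul (n := n) (Nat.le_add_left m l)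
  simp only [Nat.add_sub_cancel_left, Nat.add_sub_cancel] at h1 h2
  rw [← h1, ← h2, Nat.choose_symm_add]

/-- The extension `φ̄^λ` of `φ^λ` to the spaces `D̄_E` and `D̄_V` obtained by adding the
extra symbols `Ξ` (on edges) and `★` (on vertices) is tree-compatible.  Here `Eb` (resp.
`Vb`) is the free `K`-vector space on `ℕ^{d+1} ⊔ {Ξ}` (resp. `ℕ^{d+1} ⊔ {★}`), given by
a basis indexed by `(Fin (d+1) → ℕ) ⊕ Unit`, the extra symbol being `Sum.inr ()`. -/
theorem phi_bar_treeCompatible (K : Type*) [Field K] [CharZero K] (d : ℕ)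
    (Eb : Type*) [AddCommGroup Eb] [Module K Eb]
    (Vb : Type*) [AddCommGroup Vb] [Module K Vb]
    (eE : Module.Basis ((Fin (d + 1) → ℕ) ⊕ Unit) K Eb)
    (eV : Module.Basis ((Fin (d + 1) → ℕ) ⊕ Unit) K Vb)
    (lam : Fin (d + 1) → K)
    (φ : TensorProduct K Eb Vb →ₗ[K] TensorProduct K Eb Vb)
    (hφ₁ : ∀ a b : Fin (d + 1) → ℕ,
      φ (eE (Sum.inl a) ⊗ₜ eV (Sum.inl b)) =
        ∑ l ∈ Finset.Iic (fun i => min (a i) (b i)),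
          ((∏ i, lam i ^ l i) * ∏ i, ((b i).choose (l i) : K)) •
            (eE (Sum.inl (a - l)) ⊗ₜ[K] eV (Sum.inl (b - l))))
    (hφ₂ : ∀ a : Fin (d + 1) → ℕ, φ (eE (Sum.inl a) ⊗ₜ eV (Sum.inr ())) = 0)
    (hφ₃ : ∀ b : Fin (d + 1) → ℕ,
      φ (eE (Sum.inr ()) ⊗ₜ eV (Sum.inl b)) = eE (Sum.inr ()) ⊗ₜ[K] eV (Sum.inl b))
    (hφ₄ : φ (eE (Sum.inr ()) ⊗ₜ eV (Sum.inr ())) = 0) :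
    TreeCompatible K Eb Vb φ := by
  classical
  have h13 : ∀ (u w : Eb) (v : Vb), phi13 K Eb Vb φ (u ⊗ₜ (w ⊗ₜ v)) =
      TensorProduct.leftComm K Eb Eb Vb (w ⊗ₜ φ (u ⊗ₜ v)) := by
    intro u w v
    simp [phi13, TensorProduct.leftComm_tmul]
  have hφ0 : ∀ x : (Fin (d + 1) → ℕ) ⊕ Unit, φ (eE x ⊗ₜ eV (Sum.inr ())) = 0 := by
    rintro (a | ⟨⟩)
    · exact hφ₂ a
    · exact hφ₄
  unfold TreeCompatible
  apply (eE.tensorProduct (eE.tensorProduct eV)).ext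
  rintro ⟨x, y, b⟩
  simp only [Module.Basis.tensorProduct_apply, LinearMap.comp_apply]
  rcases b with b | ⟨⟩
  swap
  · -- vertex symbol ★ : both sides vanish
    simp [LinearMap.lTensor_tmul, hφ0, h13]
  rcases x with a | ⟨⟩ <;> rcases y with a' | ⟨⟩
  · -- main case : both a, a' in ℕ^{d+1}
    simp only [LinearMap.lTensor_tmul, h13, hφ₁, hφ₃, tmul_sum, tmul_smul, map_sum,
      map_smul, TensorProduct.leftComm_tmul, LinearMap.map_smul, Finset.smul_sum, smul_smul]
    rw [Finset.sum_comm' (t' := Finset.Iic fun i => min (a i) (b i))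
      (s' := fun m => Finset.Iic fun i => min (a' i) ((b - m) i)) ?_]
    · refine Finset.sum_congr rfl fun m hm => Finset.sum_congr rfl fun l hl => ?_
      simp only [Finset.mem_Iic, Pi.le_def, Pi.sub_apply] at hm hl
      have hbd : ∀ i, l i + m i ≤ b i := by
        intro i; have := (hm i); have := (hl i); omega
      have hsub : b - l - m = b - m - l := by
        funext i; simp only [Pi.sub_apply]; omega
      rw [hsub]
      congr 1
      have hch : ∀ i : Fin (d + 1),
          ((b i).choose (l i) : K) * ((b - l) i).choose (m i) =
          ((b i).choose (m i) : K) * ((b - m) i).choose (l i) := by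
        intro i
        have := choose_swap (hbd i)
        push_cast [Pi.sub_apply]
        exact_mod_cast congrArg (Nat.cast : ℕ → K) this
      calc ((∏ i, lam i ^ l i) * ∏ i, ((b i).choose (l i) : K)) *
            ((∏ i, lam i ^ m i) * ∏ i, (((b - l) i).choose (m i) : K))
          = ((∏ i, lam i ^ l i) * ∏ i, lam i ^ m i) *
            ∏ i, (((b i).choose (l i) : K) * ((b - l) i).choose (m i)) := by
            rw [Finset.prod_mul_distrib]; ring
        _ = ((∏ i, lam i ^ m i) * ∏ i, lam i ^ l i) *
            ∏ i, (((b i).choose (m i) : K) * ((b - m) i).choose (l i)) := by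
            rw [Finset.prod_congr rfl fun i _ => hch i]; ring
        _ = ((∏ i, lam i ^ m i) * ∏ i, ((b i).choose (m i) : K)) *
            ((∏ i, lam i ^ l i) * ∏ i, (((b - m) i).choose (l i) : K)) := by
            rw [Finset.prod_mul_distrib]; ring
    · intro l m
      simp only [Finset.mem_Iic, Pi.le_def, Pi.sub_apply]
      constructor
      · rintro ⟨h1, h2⟩
        exact ⟨fun i => by have := h1 i; have := h2 i; omega,
               fun i => by have := h1 i; have := h2 i; omega⟩
      · rintro ⟨h1, h2⟩
        exact ⟨fun i => by have := h1 i; have := h2 i; omega,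
               fun i => by have := h1 i; have := h2 i; omega⟩
  · -- x = a, y = Ξ
    simp only [LinearMap.lTensor_tmul, h13, hφ₁, hφ₃, tmul_sum, tmul_smul, map_sum,
      map_smul, TensorProduct.leftComm_tmul, Finset.smul_sum]
  · -- x = Ξ, y = a'
    simp only [LinearMap.lTensor_tmul, h13, hφ₁, hφ₃, tmul_sum, tmul_smul, map_sum,
      map_smul, TensorProduct.leftComm_tmul, Finset.smul_sum]
  · -- x = Ξ, y = Ξ
    simp only [LinearMap.lTensor_tmul, h13, hφ₃, TensorProduct.leftComm_tmul]
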